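/- arXiv:2401.06339 — 3 statements merged into one kernel-verified Lean document; each statement's English description precedes it below -/
import Mathlib

section
/- A boundary steady state with x₁ > 0 and x₂ = 0 of the system S' = D(S_in−S) − f₁(S,x₂)x₁ − f₂(S,x₁)x₂, x₁' = (f₁(S,x₂)−D₁)x₁, x₂' = (f₂(S,x₁)−D₂)x₂ exists if and only if the break-even concentration λ₁(D) (the unique S with f₁(S,0)=D₁) exists and satisfies S_in > λ₁(D); in that case the steady state is unique and equals (λ₁(D), D(S_in−λ₁(D))/D₁, 0). -/
/-- A boundary steady state with `x₁ > 0`, `x₂ = 0` exists iff the break-even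
concentration `λ₁(D)` exists and `S_in > λ₁(D)`; in that case it is unique and equals
`(λ₁(D), D(S_in−λ₁(D))/D₁, 0)`. -/
theorem stmt6 (D D₁ D₂ Sin : ℝ)
    (hD : 0 < D) (hD₁ : 0 < D₁) (hD₂ : 0 < D₂) (hSin : 0 < Sin)
    (f₁ f₂ : ℝ → ℝ → ℝ)
    (hf₁0 : ∀ x : ℝ, f₁ 0 x = 0)
    (hmono : StrictMono (fun S => f₁ S 0)) :
    ((∃ S x₁ : ℝ, 0 ≤ S ∧ 0 < x₁ ∧
        D * (Sin - S) - f₁ S 0 * x₁ - f₂ S x₁ * 0 = 0 ∧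
        (f₁ S 0 - D₁) * x₁ = 0 ∧ (f₂ S x₁ - D₂) * 0 = 0) ↔
      (∃ lam : ℝ, 0 ≤ lam ∧ f₁ lam 0 = D₁ ∧ Sin > lam)) ∧
    (∀ S x₁ lam : ℝ, 0 ≤ S → 0 < x₁ →
      D * (Sin - S) - f₁ S 0 * x₁ - f₂ S x₁ * 0 = 0 →
      (f₁ S 0 - D₁) * x₁ = 0 → (f₂ S x₁ - D₂) * 0 = 0 →
      0 ≤ lam → f₁ lam 0 = D₁ →
      S = lam ∧ x₁ = D * (Sin - lam) / D₁) := by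
  constructor
  · constructor
    · rintro ⟨S, x₁, hS, hx₁, h1, h2, _⟩
      have hf : f₁ S 0 = D₁ := by
        rcases mul_eq_zero.mp h2 with h | h
        · linarith
        · exact absurd h (ne_of_gt hx₁)
      refine ⟨S, hS, hf, ?_⟩
      have : D * (Sin - S) = D₁ * x₁ := by rw [← hf]; linarith
      nlinarith
    · rintro ⟨lam, hlam, hf, hgt⟩
      refine ⟨lam, D * (Sin - lam) / D₁, hlam, div_pos (mul_pos hD (by linarith)) hD₁, ?_, by rw [hf]; ring, by ring⟩
      rw [hf]; field_simp; ring
  · intro S x₁ lam hS hx₁ h1 h2 _ hlam hflam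
    have hf : f₁ S 0 = D₁ := by
      rcases mul_eq_zero.mp h2 with h | h
      · linarith
      · exact absurd h (ne_of_gt hx₁)
    have hSeq : S = lam := hmono.injective (show f₁ S 0 = f₁ lam 0 by rw [hf, hflam])
    refine ⟨hSeq, ?_⟩
    subst hSeq
    rw [hf] at h1
    field_simp
    linarith
end

section
/- Let P(λ) = λ³ + c₁λ² + c₂λ + c₃ be a cubic real polynomial with c₃ < 0. Then P has at least one root with strictly positive real part. Consequently the coexistence steady state E* of the chemostat system, whose Jacobian has characteristic polynomial with c₃ = −(DGH + D₁FG + D₂EH)x₁*x₂* < 0 (all of D,D₁,D₂,E,F,G,H,x₁*,x₂* positive), is linearly unstable whenever it exists. -/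
lemma cubic_pos_root (c₁ c₂ c₃ : ℝ) (h : c₃ < 0) :
    ∃ x : ℝ, 0 < x ∧ x ^ 3 + c₁ * x ^ 2 + c₂ * x + c₃ = 0 := by
  set p : ℝ → ℝ := fun x => x ^ 3 + c₁ * x ^ 2 + c₂ * x + c₃ with hp
  have hc : Continuous p := by fun_prop
  set M : ℝ := 1 + |c₁| + |c₂| + |c₃| with hM
  have hM1 : 1 ≤ M := by have := abs_nonneg c₁; have := abs_nonneg c₂; have := abs_nonneg c₃; simp only [hM]; linarith
  have hpM : 0 < p M := by
    have h1 : c₁ ≤ |c₁| := le_abs_self _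
    have h2 : c₂ ≤ |c₂| := le_abs_self _
    have h3 : c₃ ≤ |c₃| := le_abs_self _
    have h1' : -|c₁| ≤ c₁ := neg_abs_le _
    have h2' : -|c₂| ≤ c₂ := neg_abs_le _
    have h3' : -|c₃| ≤ c₃ := neg_abs_le _
    have a1 : (0:ℝ) ≤ |c₁| := abs_nonneg _
    have a2 : (0:ℝ) ≤ |c₂| := abs_nonneg _
    have a3 : (0:ℝ) ≤ |c₃| := abs_nonneg _
    simp only [hp, hM]
    nlinarith [sq_nonneg (1 + |c₁| + |c₂| + |c₃|), sq_nonneg (|c₁| + |c₂| + |c₃|),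
      mul_nonneg a1 a2, mul_nonneg a2 a3, mul_nonneg a1 a3,
      mul_nonneg (mul_nonneg a1 a2) a3]
  have h0 : p 0 < 0 := by simp [hp, h]
  have h0M : (0:ℝ) ≤ M := by linarith
  obtain ⟨x, hx, hxp⟩ := intermediate_value_Icc h0M hc.continuousOn
    (Set.mem_Icc.2 ⟨le_of_lt h0, le_of_lt hpM⟩)
  refine ⟨x, ?_, hxp⟩
  rcases hx with ⟨hx0, hxM⟩
  rcases lt_or_eq_of_le hx0 with h' | h'
  · exact h'
  · exfalso; rw [← h'] at hxp; linarith
/-- A monic real cubic with `c₃ < 0` has a root with strictly positive real part;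
consequently the coexistence steady state, whose characteristic polynomial has
`c₃ = −(DGH + D₁FG + D₂EH)x₁*x₂* < 0`, is linearly unstable whenever it exists. -/
theorem stmt9 :
    (∀ c₁ c₂ c₃ : ℝ, c₃ < 0 →
      ∃ z : ℂ, z ^ 3 + (c₁ : ℂ) * z ^ 2 + (c₂ : ℂ) * z + (c₃ : ℂ) = 0 ∧ 0 < z.re) ∧
    (∀ D D₁ D₂ E F G H x₁ x₂ : ℝ,
      0 < D → 0 < D₁ → 0 < D₂ → 0 < E → 0 < F → 0 < G → 0 < H → 0 < x₁ → 0 < x₂ →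
      (-((D * G * H + D₁ * F * G + D₂ * E * H) * x₁ * x₂) < 0 ∧
       ∀ c₁ c₂ : ℝ, ∃ z : ℂ,
         z ^ 3 + (c₁ : ℂ) * z ^ 2 + (c₂ : ℂ) * z +
           ((-((D * G * H + D₁ * F * G + D₂ * E * H) * x₁ * x₂) : ℝ) : ℂ) = 0 ∧
         0 < z.re)) := by
  have main : ∀ c₁ c₂ c₃ : ℝ, c₃ < 0 →
      ∃ z : ℂ, z ^ 3 + (c₁ : ℂ) * z ^ 2 + (c₂ : ℂ) * z + (c₃ : ℂ) = 0 ∧ 0 < z.re := by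
    intro c₁ c₂ c₃ h
    obtain ⟨x, hx, hxp⟩ := cubic_pos_root c₁ c₂ c₃ h
    refine ⟨(x : ℂ), ?_, by simpa using hx⟩
    have := congrArg (fun t : ℝ => (t : ℂ)) hxp
    push_cast at this
    simpa using this
  refine ⟨main, fun D D₁ D₂ E F G H x₁ x₂ hD hD₁ hD₂ hE hF hG hH hx₁ hx₂ => ?_⟩
  have hneg : -((D * G * H + D₁ * F * G + D₂ * E * H) * x₁ * x₂) < 0 := by
    have : 0 < (D * G * H + D₁ * F * G + D₂ * E * H) * x₁ * x₂ := by positivity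
    linarith
  exact ⟨hneg, fun c₁ c₂ => main c₁ c₂ _ hneg⟩
end

section
/- Assume both boundary steady states E₁ and E₂ of the two-species interspecific density-dependent chemostat exist (i.e., S_in > λᵢ(D) for i = 1,2). Then a positive (coexistence) steady state E* exists if and only if both E₁ and E₂ are locally exponentially stable, i.e., if and only if f₂(λ₁(D), D(S_in−λ₁(D))/D₁) < D₂ and f₁(λ₂(D), D(S_in−λ₂(D))/D₂) < D₁; and when E* exists it is unique. -/
open Set

lemma chem_contS (f : ℝ → ℝ → ℝ) (hC : Continuous fun p : ℝ × ℝ => f p.1 p.2) (x : ℝ) :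
    Continuous fun S => f S x :=
  hC.comp (continuous_id.prodMk continuous_const)

lemma chem_contX (f : ℝ → ℝ → ℝ) (hC : Continuous fun p : ℝ × ℝ => f p.1 p.2) (S : ℝ) :
    Continuous fun x => f S x :=
  hC.comp (continuous_const.prodMk continuous_id)

lemma chem_monoS (f : ℝ → ℝ → ℝ) (hC : Continuous fun p : ℝ × ℝ => f p.1 p.2)
    (hfS : ∀ S > (0:ℝ), ∀ x ≥ (0:ℝ), 0 < deriv (fun S' => f S' x) S)
    (x : ℝ) (hx : 0 ≤ x) : StrictMonoOn (fun S => f S x) (Ici 0) := by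
  apply strictMonoOn_of_deriv_pos (convex_Ici 0) (chem_contS f hC x).continuousOn
  intro S hS
  rw [interior_Ici] at hS
  exact hfS S hS x hx

lemma chem_antiX (f : ℝ → ℝ → ℝ) (hC : Continuous fun p : ℝ × ℝ => f p.1 p.2)
    (hfx : ∀ S > (0:ℝ), ∀ x ≥ (0:ℝ), deriv (fun x' => f S x') x < 0)
    (S : ℝ) (hS : 0 < S) : StrictAntiOn (fun x => f S x) (Ici 0) := by
  apply strictAntiOn_of_deriv_neg (convex_Ici 0) (chem_contX f hC S).continuousOn
  intro x hx
  rw [interior_Ici] at hx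
  exact hfx S hS x (le_of_lt hx)

/-- strict antitonicity of `x₂ ↦ f (S_of x₁ x₂) x₂` on the region `S_of ≥ 0`. -/
lemma chem_phi_anti (f : ℝ → ℝ → ℝ) (hC : Continuous fun p : ℝ × ℝ => f p.1 p.2)
    (hfS : ∀ S > (0:ℝ), ∀ x ≥ (0:ℝ), 0 < deriv (fun S' => f S' x) S)
    (hfx : ∀ S > (0:ℝ), ∀ x ≥ (0:ℝ), deriv (fun x' => f S x') x < 0)
    (D D₁ D₂ Sin : ℝ) (hD : 0 < D) (hD₂ : 0 < D₂) (x₁ x₂ x₂' : ℝ)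
    (hx₂ : 0 ≤ x₂) (hlt : x₂ < x₂') (hS' : 0 ≤ Sin - (D₁*x₁ + D₂*x₂')/D) :
    f (Sin - (D₁*x₁ + D₂*x₂')/D) x₂' < f (Sin - (D₁*x₁ + D₂*x₂)/D) x₂ := by
  set S' := Sin - (D₁*x₁ + D₂*x₂')/D with hS'def
  set S := Sin - (D₁*x₁ + D₂*x₂)/D with hSdef
  have hSS' : S' < S := by
    rw [hS'def, hSdef]
    have : (D₁*x₁ + D₂*x₂)/D < (D₁*x₁ + D₂*x₂')/D := by
      rw [div_lt_div_iff_of_pos_right hD]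
      nlinarith
    linarith
  have hSpos : 0 < S := lt_of_le_of_lt hS' hSS'
  calc f S' x₂' < f S x₂' :=
        chem_monoS f hC hfS x₂' (le_trans hx₂ hlt.le) hS' (le_of_lt hSpos) hSS'
    _ < f S x₂ := chem_antiX f hC hfx S hSpos hx₂ (le_trans hx₂ hlt.le) hlt

/-- strict antitonicity of `x₁ ↦ f (S_of x₁ x₂) x₂` on the region `S_of ≥ 0`. -/
lemma chem_phi_anti₁ (f : ℝ → ℝ → ℝ) (hC : Continuous fun p : ℝ × ℝ => f p.1 p.2)
    (hfS : ∀ S > (0:ℝ), ∀ x ≥ (0:ℝ), 0 < deriv (fun S' => f S' x) S)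
    (D D₁ D₂ Sin : ℝ) (hD : 0 < D) (hD₁ : 0 < D₁) (x₂ x₁ x₁' : ℝ)
    (hx₂ : 0 ≤ x₂) (hlt : x₁ < x₁') (hS' : 0 ≤ Sin - (D₁*x₁' + D₂*x₂)/D) :
    f (Sin - (D₁*x₁' + D₂*x₂)/D) x₂ < f (Sin - (D₁*x₁ + D₂*x₂)/D) x₂ := by
  have hSS' : Sin - (D₁*x₁' + D₂*x₂)/D < Sin - (D₁*x₁ + D₂*x₂)/D := by
    have : (D₁*x₁ + D₂*x₂)/D < (D₁*x₁' + D₂*x₂)/D := by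
      rw [div_lt_div_iff_of_pos_right hD]
      nlinarith
    linarith
  exact chem_monoS f hC hfS x₂ hx₂ hS' (le_trans hS' hSS'.le) hSS'

/-- Existence of the isocline height above `x₁`. -/
lemma chem_root_exists (f : ℝ → ℝ → ℝ) (hC : Continuous fun p : ℝ × ℝ => f p.1 p.2)
    (hfS : ∀ S > (0:ℝ), ∀ x ≥ (0:ℝ), 0 < deriv (fun S' => f S' x) S)
    (hf0 : ∀ x ≥ (0:ℝ), f 0 x = 0)
    (D D₁ D₂ Sin lam Dv : ℝ) (hD : 0 < D) (hD₂ : 0 < D₂)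
    (hlam : 0 < lam) (hbe : f lam 0 = Dv) (hDv : 0 < Dv)
    (x₁ : ℝ) (hx₁ : lam ≤ Sin - (D₁*x₁ + D₂*0)/D) :
    ∃ x₂, 0 ≤ x₂ ∧ 0 ≤ Sin - (D₁*x₁ + D₂*x₂)/D ∧ f (Sin - (D₁*x₁ + D₂*x₂)/D) x₂ = Dv := by
  set m := (D*Sin - D₁*x₁)/D₂ with hm
  have hm0 : Sin - (D₁*x₁ + D₂*m)/D = 0 := by
    rw [hm]; field_simp; ring
  have hmnn : 0 ≤ m := by
    have h2 : D * (Sin - (D₁*x₁ + D₂*0)/D) = D*Sin - D₁*x₁ := by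
      field_simp; ring
    have h1 : D * lam ≤ D * (Sin - (D₁*x₁ + D₂*0)/D) :=
      mul_le_mul_of_nonneg_left hx₁ hD.le
    rw [hm]
    apply div_nonneg _ hD₂.le
    nlinarith
  set g : ℝ → ℝ := fun x₂ => f (Sin - (D₁*x₁ + D₂*x₂)/D) x₂ with hg
  have hgc : Continuous g := by
    rw [hg]
    exact hC.comp (Continuous.prodMk (by continuity) continuous_id)
  have hgm : g m = 0 := by
    rw [hg]; simp only; rw [hm0]; exact hf0 m hmnn
  have hg0 : Dv ≤ g 0 := by
    rw [hg, ← hbe]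
    exact (chem_monoS f hC hfS 0 le_rfl).monotoneOn hlam.le (le_trans hlam.le hx₁) hx₁
  have hmem : Dv ∈ Icc (g m) (g 0) := ⟨by rw [hgm]; exact hDv.le, hg0⟩
  obtain ⟨x₂, hx₂mem, hgx₂⟩ := intermediate_value_Icc' hmnn hgc.continuousOn hmem
  refine ⟨x₂, hx₂mem.1, ?_, hgx₂⟩
  have key : Sin - (D₁*x₁ + D₂*x₂)/D - (Sin - (D₁*x₁ + D₂*m)/D) = D₂*(m - x₂)/D := by
    ring
  have : 0 ≤ D₂*(m - x₂)/D := div_nonneg (mul_nonneg hD₂.le (sub_nonneg.mpr hx₂mem.2)) hD.le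
  linarith [hm0 ▸ key, this]

/-- Uniqueness of the isocline height. -/
lemma chem_root_unique (f : ℝ → ℝ → ℝ) (hC : Continuous fun p : ℝ × ℝ => f p.1 p.2)
    (hfS : ∀ S > (0:ℝ), ∀ x ≥ (0:ℝ), 0 < deriv (fun S' => f S' x) S)
    (hfx : ∀ S > (0:ℝ), ∀ x ≥ (0:ℝ), deriv (fun x' => f S x') x < 0)
    (D D₁ D₂ Sin Dv : ℝ) (hD : 0 < D) (hD₂ : 0 < D₂) (x₁ a b : ℝ)
    (ha : 0 ≤ a ∧ 0 ≤ Sin - (D₁*x₁ + D₂*a)/D ∧ f (Sin - (D₁*x₁ + D₂*a)/D) a = Dv)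
    (hb : 0 ≤ b ∧ 0 ≤ Sin - (D₁*x₁ + D₂*b)/D ∧ f (Sin - (D₁*x₁ + D₂*b)/D) b = Dv) :
    a = b := by
  rcases lt_trichotomy a b with h | h | h
  · have := chem_phi_anti f hC hfS hfx D D₁ D₂ Sin hD hD₂ x₁ a b ha.1 h hb.2.1
    rw [ha.2.2, hb.2.2] at this; linarith
  · exact h
  · have := chem_phi_anti f hC hfS hfx D D₁ D₂ Sin hD hD₂ x₁ b a hb.1 h ha.2.1
    rw [ha.2.2, hb.2.2] at this; linarith

/-- A coexistence steady state forces the stability inequality for the boundary state of `f`. -/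
lemma chem_fwd (f g : ℝ → ℝ → ℝ)
    (hCf : Continuous fun p : ℝ × ℝ => f p.1 p.2) (hCg : Continuous fun p : ℝ × ℝ => g p.1 p.2)
    (hfS : ∀ S > (0:ℝ), ∀ x ≥ (0:ℝ), 0 < deriv (fun S' => f S' x) S)
    (hfx : ∀ S > (0:ℝ), ∀ x ≥ (0:ℝ), deriv (fun x' => f S x') x < 0)
    (hgS : ∀ S > (0:ℝ), ∀ x ≥ (0:ℝ), 0 < deriv (fun S' => g S' x) S)
    (hgx : ∀ S > (0:ℝ), ∀ x ≥ (0:ℝ), deriv (fun x' => g S x') x < 0)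
    (D Df Dg Sin lamf : ℝ) (hD : 0 < D) (hDf : 0 < Df)
    (hlamf : 0 < lamf) (hbef : f lamf 0 = Df)
    (S xg xf : ℝ) (hS : 0 < S) (hxg : 0 < xg) (hxf : 0 < xf)
    (hbal : D * (Sin - S) = Df * xg + Dg * xf) (hDg : 0 < Dg)
    (hef : f S xf = Df) (heg : g S xg = Dg) :
    g lamf (D * (Sin - lamf) / Df) < Dg := by
  have h1 : f S xf < f S 0 := chem_antiX f hCf hfx S hS (mem_Ici.mpr le_rfl) hxf.le hxf
  have hflam : f lamf 0 < f S 0 := by rw [hbef, ← hef]; exact h1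
  have hSlam : lamf < S := by
    by_contra hle
    push_neg at hle
    have := (chem_monoS f hCf hfS 0 le_rfl).monotoneOn hS.le hlamf.le hle
    linarith
  have hxglt : xg < D * (Sin - lamf) / Df := by
    rw [lt_div_iff₀ hDf]
    nlinarith
  have hXnn : (0:ℝ) ≤ D * (Sin - lamf) / Df := le_trans hxg.le hxglt.le
  have h2 : g lamf (D * (Sin - lamf) / Df) < g lamf xg :=
    chem_antiX g hCg hgx lamf hlamf hxg.le hXnn hxglt
  have h3 : g lamf xg < g S xg :=
    chem_monoS g hCg hgS xg hxg.le hlamf.le hS.le hSlam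
  rw [heg] at h3
  linarith

/-- two coexistence steady states cannot have `S < S'`. -/
lemma chem_uniq_aux (f₁ f₂ : ℝ → ℝ → ℝ)
    (hc₁ : Continuous fun p : ℝ × ℝ => f₁ p.1 p.2) (hc₂ : Continuous fun p : ℝ × ℝ => f₂ p.1 p.2)
    (hf₁S : ∀ S > (0:ℝ), ∀ x ≥ (0:ℝ), 0 < deriv (fun S' => f₁ S' x) S)
    (hf₂S : ∀ S > (0:ℝ), ∀ x ≥ (0:ℝ), 0 < deriv (fun S' => f₂ S' x) S)
    (hf₁x : ∀ S > (0:ℝ), ∀ x ≥ (0:ℝ), deriv (fun x' => f₁ S x') x < 0)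
    (hf₂x : ∀ S > (0:ℝ), ∀ x ≥ (0:ℝ), deriv (fun x' => f₂ S x') x < 0)
    (D D₁ D₂ Sin : ℝ) (hD : 0 < D)
    (S x₁ x₂ S' x₁' x₂' : ℝ)
    (hS : 0 < S) (hx₁ : 0 < x₁) (hx₂ : 0 < x₂)
    (hbal : D * (Sin - S) = D₁ * x₁ + D₂ * x₂) (he₁ : f₁ S x₂ = D₁) (he₂ : f₂ S x₁ = D₂)
    (hS' : 0 < S') (hx₁' : 0 < x₁') (hx₂' : 0 < x₂')
    (hbal' : D * (Sin - S') = D₁ * x₁' + D₂ * x₂') (he₁' : f₁ S' x₂' = D₁) (he₂' : f₂ S' x₁' = D₂)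
    (hD₁ : 0 < D₁) (hD₂ : 0 < D₂) :
    ¬ S < S' := by
  intro hlt
  have h1 : f₂ S x₁ < f₂ S' x₁ := chem_monoS f₂ hc₂ hf₂S x₁ hx₁.le hS.le hS'.le hlt
  have hx₁lt : x₁ < x₁' := by
    by_contra hle
    push_neg at hle
    have := (chem_antiX f₂ hc₂ hf₂x S' hS').antitoneOn hx₁'.le hx₁.le hle
    rw [he₂, he₂'] at *
    linarith
  have h2 : f₁ S x₂ < f₁ S' x₂ := chem_monoS f₁ hc₁ hf₁S x₂ hx₂.le hS.le hS'.le hlt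
  have hx₂lt : x₂ < x₂' := by
    by_contra hle
    push_neg at hle
    have := (chem_antiX f₁ hc₁ hf₁x S' hS').antitoneOn hx₂'.le hx₂.le hle
    rw [he₁, he₁'] at *
    linarith
  nlinarith

set_option maxHeartbeats 1000000 in
/-- A positive (coexistence) steady state `E*` exists iff both boundary steady states
`E₁`, `E₂` are locally exponentially stable, i.e. iff
`f₂(λ₁, D(S_in−λ₁)/D₁) < D₂` and `f₁(λ₂, D(S_in−λ₂)/D₂) < D₁`; it is unique. -/
theorem stmt13 (f₁ f₂ : ℝ → ℝ → ℝ)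
    (hC₁ : ContDiff ℝ 1 (fun p : ℝ × ℝ => f₁ p.1 p.2))
    (hC₂ : ContDiff ℝ 1 (fun p : ℝ × ℝ => f₂ p.1 p.2))
    (hf₁0 : ∀ x ≥ (0:ℝ), f₁ 0 x = 0) (hf₂0 : ∀ x ≥ (0:ℝ), f₂ 0 x = 0)
    (hf₁S : ∀ S > (0:ℝ), ∀ x ≥ (0:ℝ), 0 < deriv (fun S' => f₁ S' x) S)
    (hf₂S : ∀ S > (0:ℝ), ∀ x ≥ (0:ℝ), 0 < deriv (fun S' => f₂ S' x) S)
    (hf₁x : ∀ S > (0:ℝ), ∀ x ≥ (0:ℝ), deriv (fun x' => f₁ S x') x < 0)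
    (hf₂x : ∀ S > (0:ℝ), ∀ x ≥ (0:ℝ), deriv (fun x' => f₂ S x') x < 0)
    (D D₁ D₂ Sin lam₁ lam₂ : ℝ)
    (hD : 0 < D) (hD₁ : 0 < D₁) (hD₂ : 0 < D₂)
    (hlam₁ : 0 < lam₁) (hlam₂ : 0 < lam₂)
    (hbe₁ : f₁ lam₁ 0 = D₁) (hbe₂ : f₂ lam₂ 0 = D₂)
    (hSin₁ : Sin > lam₁) (hSin₂ : Sin > lam₂) :
    ((∃ S x₁ x₂ : ℝ, 0 < S ∧ 0 < x₁ ∧ 0 < x₂ ∧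
        D * (Sin - S) = D₁ * x₁ + D₂ * x₂ ∧ f₁ S x₂ = D₁ ∧ f₂ S x₁ = D₂) ↔
      (f₂ lam₁ (D * (Sin - lam₁) / D₁) < D₂ ∧ f₁ lam₂ (D * (Sin - lam₂) / D₂) < D₁)) ∧
    (∀ S x₁ x₂ S' x₁' x₂' : ℝ,
      0 < S → 0 < x₁ → 0 < x₂ →
      D * (Sin - S) = D₁ * x₁ + D₂ * x₂ → f₁ S x₂ = D₁ → f₂ S x₁ = D₂ →
      0 < S' → 0 < x₁' → 0 < x₂' →
      D * (Sin - S') = D₁ * x₁' + D₂ * x₂' → f₁ S' x₂' = D₁ → f₂ S' x₁' = D₂ →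
      S = S' ∧ x₁ = x₁' ∧ x₂ = x₂') := by
  classical
  have hc₁ : Continuous fun p : ℝ × ℝ => f₁ p.1 p.2 := hC₁.continuous
  have hc₂ : Continuous fun p : ℝ × ℝ => f₂ p.1 p.2 := hC₂.continuous
  constructor
  · constructor
    · rintro ⟨S, x₁, x₂, hS, hx₁, hx₂, hbal, he₁, he₂⟩
      exact ⟨chem_fwd f₁ f₂ hc₁ hc₂ hf₁S hf₁x hf₂S hf₂x D D₁ D₂ Sin lam₁ hD hD₁ hlam₁ hbe₁
          S x₁ x₂ hS hx₁ hx₂ hbal hD₂ he₁ he₂,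
        chem_fwd f₂ f₁ hc₂ hc₁ hf₂S hf₂x hf₁S hf₁x D D₂ D₁ Sin lam₂ hD hD₂ hlam₂ hbe₂
          S x₂ x₁ hS hx₂ hx₁ (by linarith) hD₁ he₂ he₁⟩
    · rintro ⟨h₁, h₂⟩
      set X1 := D * (Sin - lam₁) / D₁ with hX1def
      set X2 := D * (Sin - lam₂) / D₂ with hX2def
      have hX1pos : 0 < X1 := div_pos (mul_pos hD (by linarith)) hD₁
      have hX2pos : 0 < X2 := div_pos (mul_pos hD (by linarith)) hD₂
      have hSX1 : Sin - (D₁*X1 + D₂*0)/D = lam₁ := by rw [hX1def]; field_simp; ring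
      have hSX2 : Sin - (D₁*0 + D₂*X2)/D = lam₂ := by rw [hX2def]; field_simp; ring
      have hcond : ∀ t ∈ Icc (0:ℝ) X1, lam₁ ≤ Sin - (D₁*t + D₂*0)/D := by
        intro t ht
        rw [← hSX1]
        have h' : (D₁*t + D₂*0)/D ≤ (D₁*X1 + D₂*0)/D := by
          gcongr
          exact ht.2
        linarith
      obtain ⟨G, hGspec⟩ : ∃ G : ℝ → ℝ, ∀ t, lam₁ ≤ Sin - (D₁*t + D₂*0)/D →
          0 ≤ G t ∧ 0 ≤ Sin - (D₁*t + D₂*(G t))/D ∧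
            f₁ (Sin - (D₁*t + D₂*(G t))/D) (G t) = D₁ := by
        refine ⟨fun t =>
          if h : lam₁ ≤ Sin - (D₁*t + D₂*0)/D then
            Classical.choose (chem_root_exists f₁ hc₁ hf₁S hf₁0 D D₁ D₂ Sin lam₁ D₁ hD hD₂
              hlam₁ hbe₁ hD₁ t h)
          else 0, fun t h => ?_⟩
        simp only [dif_pos h]
        exact Classical.choose_spec (chem_root_exists f₁ hc₁ hf₁S hf₁0 D D₁ D₂ Sin
          lam₁ D₁ hD hD₂ hlam₁ hbe₁ hD₁ t h)
      have hSpos : ∀ t, lam₁ ≤ Sin - (D₁*t + D₂*0)/D → 0 < Sin - (D₁*t + D₂*(G t))/D := by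
        intro t h
        rcases (hGspec t h).2.1.lt_or_eq with h' | h'
        · exact h'
        · exfalso
          have heq := (hGspec t h).2.2
          rw [← h', hf₁0 (G t) (hGspec t h).1] at heq
          linarith
      have hGX1 : G X1 = 0 := by
        refine chem_root_unique f₁ hc₁ hf₁S hf₁x D D₁ D₂ Sin D₁ hD hD₂ X1 (G X1) 0
          (hGspec X1 (hcond X1 ⟨hX1pos.le, le_rfl⟩)) ⟨le_rfl, ?_, ?_⟩
        · rw [hSX1]; exact hlam₁.le
        · rw [hSX1]; exact hbe₁
      have hG0lt : G 0 < X2 := by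
        have spec0 := hGspec 0 (hcond 0 ⟨le_rfl, hX1pos.le⟩)
        by_contra hge
        push_neg at hge
        rcases hge.eq_or_lt with heq | hlt
        · have he := spec0.2.2
          rw [← heq, hSX2] at he
          linarith
        · have := chem_phi_anti f₁ hc₁ hf₁S hf₁x D D₁ D₂ Sin hD hD₂ 0 X2 (G 0)
            hX2pos.le hlt spec0.2.1
          rw [spec0.2.2, hSX2] at this
          linarith
      have hH0 : D₂ < f₂ (Sin - (D₁*0 + D₂*(G 0))/D) 0 := by
        have hlam₂lt : lam₂ < Sin - (D₁*0 + D₂*(G 0))/D := by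
          rw [← hSX2]
          have h' : (D₁*0 + D₂*(G 0))/D < (D₁*0 + D₂*X2)/D := by
            rw [div_lt_div_iff_of_pos_right hD]
            nlinarith
          linarith
        have := chem_monoS f₂ hc₂ hf₂S 0 le_rfl (mem_Ici.mpr hlam₂.le)
          (mem_Ici.mpr (by linarith)) hlam₂lt
        simp only at this
        rw [hbe₂] at this
        exact this
      have hGcont : ContinuousOn G (Icc 0 X1) := by
        intro a ha
        rw [Metric.continuousWithinAt_iff]
        intro ε hε
        have speca := hGspec a (hcond a ha)
        have hSg : 0 < Sin - (D₁*a + D₂*(G a))/D := hSpos a (hcond a ha)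
        have hgm : G a < (D*Sin - D₁*a)/D₂ := by
          rw [lt_div_iff₀ hD₂]
          have h' : D * (Sin - (D₁*a + D₂*(G a))/D) = D*Sin - (D₁*a + D₂*(G a)) := by
            field_simp
          nlinarith [mul_pos hD hSg]
        set η := min ε ((D*Sin - D₁*a)/D₂ - G a) / 2 with hηdef
        have hηpos : 0 < η := div_pos (lt_min hε (by linarith)) two_pos
        have hηε : η < ε := by
          have := min_le_left ε ((D*Sin - D₁*a)/D₂ - G a)
          rw [hηdef]; linarith
        set u := G a + η with hudef
        have hSu : 0 < Sin - (D₁*a + D₂*u)/D := by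
          have hub : u < (D*Sin - D₁*a)/D₂ := by
            have := min_le_right ε ((D*Sin - D₁*a)/D₂ - G a)
            rw [hudef, hηdef]; linarith
          have h' : Sin - (D₁*a + D₂*u)/D = (D*Sin - D₁*a - D₂*u)/D := by
            field_simp; ring
          rw [h']
          apply div_pos _ hD
          nlinarith [(lt_div_iff₀ hD₂).mp hub]
        have hφu : f₁ (Sin - (D₁*a + D₂*u)/D) u < D₁ := by
          have := chem_phi_anti f₁ hc₁ hf₁S hf₁x D D₁ D₂ Sin hD hD₂ a (G a) u
            speca.1 (by rw [hudef]; linarith) hSu.le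
          rw [speca.2.2] at this
          exact this
        have hin : ∀ w : ℝ, Continuous fun t : ℝ => Sin - (D₁*t + D₂*w)/D := by
          intro w
          exact continuous_const.sub
            (((continuous_const.mul continuous_id).add continuous_const).div_const D)
        have hcu : Continuous fun t => f₁ (Sin - (D₁*t + D₂*u)/D) u :=
          (chem_contS f₁ hc₁ u).comp (hin u)
        have hE1 : ∀ᶠ t in nhds a, f₁ (Sin - (D₁*t + D₂*u)/D) u < D₁ :=
          Filter.Tendsto.eventually_lt_const hφu hcu.continuousAt
        have key : ∀ᶠ t in nhds a, ∀ x ∈ Icc (0:ℝ) X1, t = x → G t < G a + ε := by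
          filter_upwards [hE1] with t hE1t x hx htx
          subst htx
          have spect := hGspec t (hcond t hx)
          have hGtu : G t < u := by
            rcases le_or_gt 0 (Sin - (D₁*t + D₂*u)/D) with hS0 | hS0
            · by_contra hge
              push_neg at hge
              rcases hge.eq_or_lt with heq | hlt'
              · rw [heq, spect.2.2] at hE1t
                linarith
              · have := chem_phi_anti f₁ hc₁ hf₁S hf₁x D D₁ D₂ Sin hD hD₂ t u (G t)
                  (by rw [hudef]; linarith [speca.1]) hlt' spect.2.1
                rw [spect.2.2] at this
                linarith
            · have key2 : Sin - (D₁*t + D₂*(G t))/D - (Sin - (D₁*t + D₂*u)/D)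
                  = D₂*(u - G t)/D := by ring
              have hpos : 0 < D₂*(u - G t)/D := by linarith [spect.2.1]
              rcases div_pos_iff.mp hpos with ⟨hnum, _⟩ | ⟨_, hden⟩
              · nlinarith
              · linarith
          rw [hudef] at hGtu
          linarith
        by_cases hgε : G a < ε
        · rw [Metric.eventually_nhds_iff] at key
          obtain ⟨δ, hδ, hkey⟩ := key
          refine ⟨δ, hδ, fun t ht hdist => ?_⟩
          have hup := hkey hdist t ht rfl
          have spect := hGspec t (hcond t ht)
          rw [Real.dist_eq, abs_sub_lt_iff]
          constructor <;> linarith [spect.1]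
        · push_neg at hgε
          set v := G a - ε/2 with hvdef
          have hvpos : 0 < v := by rw [hvdef]; linarith
          have hSv : 0 < Sin - (D₁*a + D₂*v)/D := by
            have h' : (D₁*a + D₂*v)/D < (D₁*a + D₂*(G a))/D := by
              rw [div_lt_div_iff_of_pos_right hD]
              have hvG : v < G a := by rw [hvdef]; linarith
              nlinarith [hvG, hD₂]
            linarith
          have hφv : D₁ < f₁ (Sin - (D₁*a + D₂*v)/D) v := by
            have := chem_phi_anti f₁ hc₁ hf₁S hf₁x D D₁ D₂ Sin hD hD₂ a v (G a)
              hvpos.le (by rw [hvdef]; linarith) hSg.le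
            rw [speca.2.2] at this
            exact this
          have hcv : Continuous fun t => f₁ (Sin - (D₁*t + D₂*v)/D) v :=
            (chem_contS f₁ hc₁ v).comp (hin v)
          have hE2 : ∀ᶠ t in nhds a, D₁ < f₁ (Sin - (D₁*t + D₂*v)/D) v :=
            Filter.Tendsto.eventually_const_lt hφv hcv.continuousAt
          have hE3 : ∀ᶠ t in nhds a, 0 < Sin - (D₁*t + D₂*v)/D :=
            Filter.Tendsto.eventually_const_lt hSv (hin v).continuousAt
          have key' : ∀ᶠ t in nhds a, ∀ x ∈ Icc (0:ℝ) X1, t = x →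
              G a - ε < G t ∧ G t < G a + ε := by
            filter_upwards [key, hE2, hE3] with t hk h2 h3 x hx htx
            subst htx
            refine ⟨?_, hk t hx rfl⟩
            have spect := hGspec t (hcond t hx)
            have hvlt : v < G t := by
              by_contra hge
              push_neg at hge
              rcases hge.eq_or_lt with heq | hlt'
              · rw [← heq, spect.2.2] at h2
                linarith
              · have := chem_phi_anti f₁ hc₁ hf₁S hf₁x D D₁ D₂ Sin hD hD₂ t (G t) v
                  spect.1 hlt' h3.le
                rw [spect.2.2] at this
                linarith
            rw [hvdef] at hvlt
            linarith
          rw [Metric.eventually_nhds_iff] at key'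
          obtain ⟨δ, hδ, hkey⟩ := key'
          refine ⟨δ, hδ, fun t ht hdist => ?_⟩
          obtain ⟨hl, hup⟩ := hkey hdist t ht rfl
          rw [Real.dist_eq, abs_sub_lt_iff]
          constructor <;> linarith
      have hHcont : ContinuousOn (fun t => f₂ (Sin - (D₁*t + D₂*(G t))/D) t) (Icc 0 X1) := by
        exact hc₂.comp_continuousOn (ContinuousOn.prodMk (ContinuousOn.sub continuousOn_const
          (ContinuousOn.div_const (ContinuousOn.add (continuousOn_const.mul continuousOn_id)
            (continuousOn_const.mul hGcont)) D)) continuousOn_id)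
      have hHX1 : f₂ (Sin - (D₁*X1 + D₂*(G X1))/D) X1 < D₂ := by
        rw [hGX1, hSX1]
        exact h₁
      have hmem : D₂ ∈ Icc (f₂ (Sin - (D₁*X1 + D₂*(G X1))/D) X1)
          (f₂ (Sin - (D₁*0 + D₂*(G 0))/D) 0) := ⟨hHX1.le, hH0.le⟩
      obtain ⟨a, hamem, hHa⟩ := intermediate_value_Icc' hX1pos.le hHcont hmem
      simp only at hHa
      have speca := hGspec a (hcond a hamem)
      have ha0 : 0 < a := by
        rcases hamem.1.lt_or_eq with h | h
        · exact h
        · exfalso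
          rw [← h] at hHa
          linarith
      have haX1 : a < X1 := by
        rcases hamem.2.lt_or_eq with h | h
        · exact h
        · exfalso
          rw [h] at hHa
          linarith
      have hGa : 0 < G a := by
        rcases speca.1.lt_or_eq with h | h
        · exact h
        · exfalso
          have heq := speca.2.2
          rw [← h] at heq
          have hlam₁lt : lam₁ < Sin - (D₁*a + D₂*0)/D := by
            rw [← hSX1]
            have h' : (D₁*a + D₂*0)/D < (D₁*X1 + D₂*0)/D := by
              rw [div_lt_div_iff_of_pos_right hD]
              nlinarith
            linarith
          have := chem_monoS f₁ hc₁ hf₁S 0 le_rfl (mem_Ici.mpr hlam₁.le)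
            (mem_Ici.mpr (by linarith)) hlam₁lt
          simp only at this
          rw [hbe₁, heq] at this
          linarith
      refine ⟨Sin - (D₁*a + D₂*(G a))/D, a, G a, hSpos a (hcond a hamem), ha0, hGa, ?_,
        speca.2.2, hHa⟩
      field_simp
      ring
  · intro S x₁ x₂ S' x₁' x₂' hS hx₁ hx₂ hbal he₁ he₂ hS' hx₁' hx₂' hbal' he₁' he₂'
    have hSS' : S = S' := by
      rcases lt_trichotomy S S' with h | h | h
      · exact absurd h (chem_uniq_aux f₁ f₂ hc₁ hc₂ hf₁S hf₂S hf₁x hf₂x D D₁ D₂ Sin hD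
          S x₁ x₂ S' x₁' x₂' hS hx₁ hx₂ hbal he₁ he₂ hS' hx₁' hx₂' hbal' he₁' he₂' hD₁ hD₂)
      · exact h
      · exact absurd h (chem_uniq_aux f₁ f₂ hc₁ hc₂ hf₁S hf₂S hf₁x hf₂x D D₁ D₂ Sin hD
          S' x₁' x₂' S x₁ x₂ hS' hx₁' hx₂' hbal' he₁' he₂' hS hx₁ hx₂ hbal he₁ he₂ hD₁ hD₂)
    subst hSS'
    have hx₁eq : x₁ = x₁' := by
      apply (chem_antiX f₂ hc₂ hf₂x S hS).injOn (mem_Ici.mpr hx₁.le) (mem_Ici.mpr hx₁'.le)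
      simp only
      rw [he₂, he₂']
    have hx₂eq : x₂ = x₂' := by
      apply (chem_antiX f₁ hc₁ hf₁x S hS).injOn (mem_Ici.mpr hx₂.le) (mem_Ici.mpr hx₂'.le)
      simp only
      rw [he₁, he₁']
    exact ⟨rfl, hx₁eq, hx₂eq⟩
end
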